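/- Let n ≥ 1, let a : Fin n → ℕ satisfy a i ≥ 2 for every i, let f(z) = ∑ i, (z i)^(a i), let d be the least common multiple of the a i and dᵢ = d / (a i). Set V = f⁻¹(0). For every z ∈ V with z ≠ 0, the vector w = (fun i => (dᵢ : ℂ) * z i) satisfies fderiv ℂ f z w = 0 and re ⟪z, w⟫ > 0 (Hermitian inner product on EuclideanSpace ℂ (Fin n)). Consequently, at every point of V ∖ {0} there is a vector tangent to V which is not tangent to the sphere through that point centered at the origin, so V ∖ {0} meets every sphere centered at the origin transversally. -/

import Mathlib

open scoped RealInnerProductSpace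

/-- Let `f z = ∑ i, (z i) ^ (a i)` be a Pham–Brieskorn
polynomial (`a i ≥ 2`), `d = lcm (a i)`, `dᵢ = d / a i`, and `V = f⁻¹(0)`.
For every `z ∈ V` with `z ≠ 0`, the vector `w = fun i => dᵢ * z i` (the
infinitesimal generator of the weighted `ℝ⁺`-action) is tangent to `V`
(`fderiv ℂ f z w = 0`) but not tangent to the sphere through `z`
(`re ⟪z, w⟫ > 0`); hence `V ∖ {0}` meets every sphere centered at the
origin transversally. -/
theorem phamBrieskorn_zero_locus_transverse_to_spheres
    (n : ℕ) (hn : 1 ≤ n) (a : Fin n → ℕ) (ha : ∀ i, 2 ≤ a i)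
    (d : ℕ) (hd : d = Finset.univ.lcm a)
    (z : EuclideanSpace ℂ (Fin n)) (hzV : (∑ i, z i ^ a i) = 0) (hz : z ≠ 0) :
    fderiv ℂ (fun z : EuclideanSpace ℂ (Fin n) => ∑ i, z i ^ a i) z
        ((WithLp.equiv 2 (Fin n → ℂ)).symm fun i => ((d / a i : ℕ) : ℂ) * z i) = 0 ∧
      0 < (inner ℂ z
            ((WithLp.equiv 2 (Fin n → ℂ)).symm fun i => ((d / a i : ℕ) : ℂ) * z i) : ℂ).re := by
  have hdvd : ∀ i, a i ∣ d := fun i => hd ▸ Finset.dvd_lcm (Finset.mem_univ i)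
  have hdpos : 0 < d := by
    refine Nat.pos_of_ne_zero fun h0 => ?_
    rw [hd] at h0
    rw [Finset.lcm_eq_zero_iff] at h0
    simp only [Set.mem_image, Finset.mem_coe, Finset.mem_univ, true_and] at h0
    obtain ⟨j, hj⟩ := h0
    have := ha j; omega
  have hw : ∀ i, (1 : ℕ) ≤ d / a i := fun i =>
    Nat.one_le_div_iff (by have := ha i; omega) |>.mpr (Nat.le_of_dvd hdpos (hdvd i))
  constructor
  · have hder : HasFDerivAt (fun z : EuclideanSpace ℂ (Fin n) => ∑ i, z i ^ a i)
        (∑ i : Fin n, ((a i : ℂ) * z i ^ (a i - 1)) •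
          (EuclideanSpace.proj i : EuclideanSpace ℂ (Fin n) →L[ℂ] ℂ)) z := by
      apply HasFDerivAt.fun_sum
      intro i _
      exact (hasDerivAt_pow (a i) (z i)).comp_hasFDerivAt z
        ((EuclideanSpace.proj i : EuclideanSpace ℂ (Fin n) →L[ℂ] ℂ).hasFDerivAt :
          HasFDerivAt (fun y : EuclideanSpace ℂ (Fin n) => y i)
            (EuclideanSpace.proj i : EuclideanSpace ℂ (Fin n) →L[ℂ] ℂ) z)
    rw [hder.fderiv]
    simp only [ContinuousLinearMap.sum_apply, ContinuousLinearMap.smul_apply]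
    have happ : ∀ i : Fin n,
        (EuclideanSpace.proj i : EuclideanSpace ℂ (Fin n) →L[ℂ] ℂ)
          ((WithLp.equiv 2 (Fin n → ℂ)).symm fun i => ((d / a i : ℕ) : ℂ) * z i)
        = ((d / a i : ℕ) : ℂ) * z i := fun i => rfl
    calc (∑ i : Fin n, ((a i : ℂ) * z i ^ (a i - 1)) •
          ((EuclideanSpace.proj i : EuclideanSpace ℂ (Fin n) →L[ℂ] ℂ)
            ((WithLp.equiv 2 (Fin n → ℂ)).symm fun i => ((d / a i : ℕ) : ℂ) * z i)))
        = ∑ i : Fin n, (d : ℂ) * z i ^ a i := by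
          refine Finset.sum_congr rfl fun i _ => ?_
          rw [happ i, smul_eq_mul]
          have h1 : (a i : ℂ) * ((d / a i : ℕ) : ℂ) = (d : ℂ) := by
            rw [← Nat.cast_mul, Nat.mul_div_cancel' (hdvd i)]
          have h2 : z i ^ (a i - 1) * z i = z i ^ a i := by
            rw [← pow_succ]
            congr 1
            have := ha i; omega
          calc (a i : ℂ) * z i ^ (a i - 1) * (((d / a i : ℕ) : ℂ) * z i)
              = ((a i : ℂ) * ((d / a i : ℕ) : ℂ)) * (z i ^ (a i - 1) * z i) := by ring
            _ = (d : ℂ) * z i ^ a i := by rw [h1, h2]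
      _ = (d : ℂ) * ∑ i, z i ^ a i := by rw [Finset.mul_sum]
      _ = 0 := by rw [hzV, mul_zero]
  · have hinner : (inner ℂ z ((WithLp.equiv 2 (Fin n → ℂ)).symm
        fun i => ((d / a i : ℕ) : ℂ) * z i) : ℂ).re
        = ∑ i, (d / a i : ℕ) * Complex.normSq (z i) := by
      rw [PiLp.inner_apply]
      rw [Complex.re_sum]
      refine Finset.sum_congr rfl fun i _ => ?_
      simp [RCLike.inner_apply, Complex.mul_re, Complex.normSq]
      ring
    rw [hinner]
    obtain ⟨i, hi⟩ : ∃ i, z i ≠ 0 := by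
      by_contra h
      push_neg at h
      exact hz (PiLp.ext h)
    refine Finset.sum_pos' (fun j _ => mul_nonneg (Nat.cast_nonneg _) (Complex.normSq_nonneg _)) ⟨i, Finset.mem_univ i, ?_⟩
    have : 0 < Complex.normSq (z i) := Complex.normSq_pos.mpr hi
    exact mul_pos (by exact_mod_cast Nat.lt_of_lt_of_le Nat.zero_lt_one (hw i)) this
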